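/- arXiv:2401.17057 — 2 statements merged into one kernel-verified Lean document; each statement's English description precedes it below -/
import Mathlib

section
/- For 0 < α < 1, the binary function k_α(p) = ((1-p)^α + p^α)^{1/α} is concave and strictly increasing on [0, 1/2]. -/
open Real Finset

lemma rev_mink (α : ℝ) (hα0 : 0 < α) (hα1 : α < 1) {x1 y1 x2 y2 : ℝ}
    (hx1 : 0 ≤ x1) (hy1 : 0 ≤ y1) (hx2 : 0 ≤ x2) (hy2 : 0 ≤ y2) :
    (x1 ^ α + y1 ^ α) ^ (1 / α) + (x2 ^ α + y2 ^ α) ^ (1 / α) ≤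
      ((x1 + x2) ^ α + (y1 + y2) ^ α) ^ (1 / α) := by
  have hp : (1 : ℝ) ≤ 1 / α := by
    rw [le_div_iff₀ hα0]; linarith
  have key := Real.Lp_add_le (Finset.univ : Finset (Fin 2))
    ![x1 ^ α, x2 ^ α] ![y1 ^ α, y2 ^ α] hp
  simp only [Fin.sum_univ_two, Matrix.cons_val_zero, Matrix.cons_val_one, Matrix.head_cons] at key
  rw [abs_of_nonneg (by positivity), abs_of_nonneg (by positivity),
      abs_of_nonneg (by positivity), abs_of_nonneg (by positivity),
      abs_of_nonneg (by positivity), abs_of_nonneg (by positivity),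
      one_div_one_div, one_div, Real.rpow_rpow_inv hx1 hα0.ne',
      Real.rpow_rpow_inv hx2 hα0.ne', Real.rpow_rpow_inv hy1 hα0.ne',
      Real.rpow_rpow_inv hy2 hα0.ne'] at key
  have h2 := Real.rpow_le_rpow (by positivity) key (by positivity : (0:ℝ) ≤ α⁻¹)
  rwa [Real.rpow_rpow_inv (by positivity) hα0.ne', ← one_div] at h2

lemma renyi_hom (α : ℝ) (hα0 : 0 < α) {c x y : ℝ} (hc : 0 ≤ c) (hx : 0 ≤ x) (hy : 0 ≤ y) :
    ((c * x) ^ α + (c * y) ^ α) ^ (1 / α) = c * (x ^ α + y ^ α) ^ (1 / α) := by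
  rw [Real.mul_rpow hc hx, Real.mul_rpow hc hy, ← mul_add,
    Real.mul_rpow (by positivity) (by positivity), one_div,
    Real.rpow_rpow_inv hc hα0.ne']

/-- For `0 < α < 1`, the binary Rényi norm `k_α(p) = ((1-p)^α + p^α)^{1/α}` is concave
and strictly increasing on `[0, 1/2]`. -/
theorem binary_renyi_norm_concave_mono (α : ℝ) (hα0 : 0 < α) (hα1 : α < 1) :
    ConcaveOn ℝ (Set.Icc (0 : ℝ) (1 / 2))
        (fun p : ℝ => ((1 - p) ^ α + p ^ α) ^ (1 / α)) ∧
      StrictMonoOn (fun p : ℝ => ((1 - p) ^ α + p ^ α) ^ (1 / α))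
        (Set.Icc (0 : ℝ) (1 / 2)) := by
  constructor
  · refine ⟨convex_Icc _ _, ?_⟩
    rintro x ⟨hx0, hx2⟩ y ⟨hy0, hy2⟩ a b ha hb hab
    simp only [smul_eq_mul]
    have h1x : (0:ℝ) ≤ 1 - x := by linarith
    have h1y : (0:ℝ) ≤ 1 - y := by linarith
    have key := rev_mink α hα0 hα1 (mul_nonneg ha h1x) (mul_nonneg ha hx0)
      (mul_nonneg hb h1y) (mul_nonneg hb hy0)
    rw [renyi_hom α hα0 ha h1x hx0, renyi_hom α hα0 hb h1y hy0] at key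
    have e1 : a * (1 - x) + b * (1 - y) = 1 - (a * x + b * y) := by ring_nf; linarith
    rwa [e1] at key
  · apply strictMonoOn_of_deriv_pos (convex_Icc _ _)
    · apply Continuous.continuousOn
      exact (((continuous_const.sub continuous_id).rpow_const fun _ => Or.inr hα0.le).add
        (continuous_id.rpow_const fun _ => Or.inr hα0.le)).rpow_const
        fun _ => Or.inr (by positivity)
    · intro x hx
      rw [interior_Icc] at hx
      obtain ⟨hx0, hx2⟩ := hx
      have h1x : 0 < 1 - x := by linarith
      have hlt : x < 1 - x := by linarith
      have hA : HasDerivAt (fun p : ℝ => (1 - p) ^ α) ((0 - 1) * α * (1 - x) ^ (α - 1)) x :=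
        ((hasDerivAt_const x (1:ℝ)).sub (hasDerivAt_id x)).rpow_const (Or.inl h1x.ne')
      have hB : HasDerivAt (fun p : ℝ => p ^ α) (1 * α * x ^ (α - 1)) x :=
        (hasDerivAt_id x).rpow_const (Or.inl hx0.ne')
      have hSpos : 0 < (1 - x) ^ α + x ^ α := by positivity
      have hd : HasDerivAt (fun p : ℝ => ((1 - p) ^ α + p ^ α) ^ (1 / α))
          (((0 - 1) * α * (1 - x) ^ (α - 1) + 1 * α * x ^ (α - 1)) * (1 / α) *
            ((1 - x) ^ α + x ^ α) ^ (1 / α - 1)) x :=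
        (hA.add hB).rpow_const (p := 1 / α) (Or.inl hSpos.ne')
      rw [hd.deriv]
      have hcmp : (1 - x) ^ (α - 1) < x ^ (α - 1) :=
        Real.rpow_lt_rpow_of_neg hx0 hlt (by linarith)
      have h1 : 0 < (0 - 1) * α * (1 - x) ^ (α - 1) + 1 * α * x ^ (α - 1) := by
        have := mul_lt_mul_of_pos_left hcmp hα0
        nlinarith
      have h2 : 0 < ((1 - x) ^ α + x ^ α) ^ (1 / α - 1) := Real.rpow_pos_of_pos hSpos _
      positivity
end

section
/- First-order expansion: for the truncated geometric family q_γ(x) = c_γ γ^x on {1,...,M}, writing ΔG(γ) = (M+1)/2 - Σ i q_γ(i) and ΔH(γ) = log M - H(q_γ), one has ΔG(γ)² / ΔH(γ) → 2·Var_U / 1 as γ → 1⁻, where Var_U = (M²-1)/12 is the variance of the uniform distribution on {1,...,M}; that is, ΔG(γ) ~ sqrt((M²-1)/6 · ΔH(γ)) (with natural log). -/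
open Filter

private lemma gauss_sum_aux (M : ℕ) :
    ∑ i ∈ Finset.Icc 1 M, (i : ℝ) = M * (M + 1) / 2 := by
  induction M with
  | zero => simp
  | succ n ih =>
    rw [Finset.sum_Icc_succ_top (by omega), ih]
    push_cast; ring

private lemma square_sum_aux (M : ℕ) :
    ∑ i ∈ Finset.Icc 1 M, (i : ℝ) * ((i : ℝ) * 1 ^ (i - 1)) =
      M * (M + 1) * (2 * M + 1) / 6 := by
  induction M with
  | zero => simp
  | succ n ih =>
    rw [Finset.sum_Icc_succ_top (by omega), ih]
    push_cast; ring

set_option maxHeartbeats 1000000 in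
/-- First-order expansion for the truncated geometric family `q_γ(x) ∝ γ^x` on
`{1,...,M}`: with `ΔG(γ) = (M+1)/2 - ∑ i·q_γ(i)` and `ΔH(γ) = log M - H(q_γ)`
(natural log), `ΔG(γ)²/ΔH(γ) → (M²-1)/6` as `γ → 1⁻`. -/
theorem first_order_expansion (M : ℕ) (hM : 2 ≤ M) :
    Tendsto (fun γ : ℝ =>
        (((M : ℝ) + 1) / 2 -
            ∑ i ∈ Finset.Icc 1 M, (i : ℝ) * (γ ^ i / ∑ j ∈ Finset.Icc 1 M, γ ^ j)) ^ 2 /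
          (Real.log M -
            (-∑ i ∈ Finset.Icc 1 M, (γ ^ i / ∑ j ∈ Finset.Icc 1 M, γ ^ j) *
                Real.log (γ ^ i / ∑ j ∈ Finset.Icc 1 M, γ ^ j))))
      (nhdsWithin 1 (Set.Iio 1)) (nhds (((M : ℝ) ^ 2 - 1) / 6)) := by
  have hM0 : (0 : ℝ) < M := by positivity
  have hMne : (M : ℝ) ≠ 0 := hM0.ne'
  set F : Finset ℕ := Finset.Icc 1 M with hF
  set S : ℝ → ℝ := fun γ => ∑ j ∈ F, γ ^ j with hSdef
  set P : ℝ → ℝ := fun γ => ∑ j ∈ F, (j : ℝ) * γ ^ j with hPdef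
  set S' : ℝ → ℝ := fun γ => ∑ j ∈ F, (j : ℝ) * γ ^ (j - 1) with hS'def
  set P' : ℝ → ℝ := fun γ => ∑ j ∈ F, (j : ℝ) * ((j : ℝ) * γ ^ (j - 1)) with hP'def
  set D : ℝ → ℝ := fun γ => (P' γ * S γ - P γ * S' γ) / (S γ) ^ 2 with hDdef
  set g1 : ℝ → ℝ := fun γ => ((M : ℝ) + 1) / 2 - P γ / S γ with hg1def
  set h1 : ℝ → ℝ := fun γ =>
    Real.log M - Real.log (S γ) + (P γ / S γ) * Real.log γ with hh1def
  -- positivity of S on (0, ∞)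
  have hFne : F.Nonempty := ⟨1, by simp [hF]; omega⟩
  have hS_pos : ∀ γ : ℝ, 0 < γ → 0 < S γ := by
    intro γ hγ
    exact Finset.sum_pos (fun i _ => pow_pos hγ i) hFne
  -- values at 1
  have hS1 : S 1 = M := by
    simp [hSdef, hF, Nat.card_Icc]
  have hP1 : P 1 = M * (M + 1) / 2 := by
    simp only [hPdef, one_pow, mul_one]
    exact gauss_sum_aux M
  have hS'1 : S' 1 = M * (M + 1) / 2 := by
    simp only [hS'def, one_pow, mul_one]
    exact gauss_sum_aux M
  have hP'1 : P' 1 = M * (M + 1) * (2 * M + 1) / 6 := by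
    exact square_sum_aux M
  have hD1 : D 1 = ((M : ℝ) ^ 2 - 1) / 12 := by
    rw [hDdef]; simp only []
    rw [hP'1, hS1, hP1, hS'1]
    field_simp
    ring
  have hD1ne : D 1 ≠ 0 := by
    rw [hD1]
    have h2 : (2 : ℝ) ≤ (M : ℝ) := by exact_mod_cast hM
    have : (1 : ℝ) < (M : ℝ) ^ 2 := by nlinarith
    exact ne_of_gt (div_pos (by linarith) (by norm_num))
  -- continuity
  have hScont : Continuous S := by
    apply continuous_finset_sum; intro i _; exact continuous_pow i
  have hPcont : Continuous P := by
    apply continuous_finset_sum; intro i _; exact continuous_const.mul (continuous_pow i)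
  have hS'cont : Continuous S' := by
    apply continuous_finset_sum; intro i _; exact continuous_const.mul (continuous_pow _)
  have hP'cont : Continuous P' := by
    apply continuous_finset_sum; intro i _
    exact continuous_const.mul (continuous_const.mul (continuous_pow _))
  have hDcont : ContinuousAt D 1 := by
    apply ContinuousAt.div
    · exact ((hP'cont.mul hScont).sub (hPcont.mul hS'cont)).continuousAt
    · exact (hScont.pow 2).continuousAt
    · rw [hS1]; positivity
  -- key identity γ * S' γ = P γ
  have key1 : ∀ γ : ℝ, γ * S' γ = P γ := by
    intro γ
    rw [hS'def, hPdef, Finset.mul_sum]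
    apply Finset.sum_congr rfl
    intro j hj
    have hj1 : 1 ≤ j := (Finset.mem_Icc.mp hj).1
    have hjj : j - 1 + 1 = j := by omega
    calc γ * ((j : ℝ) * γ ^ (j - 1)) = (j : ℝ) * (γ ^ (j - 1) * γ) := by ring
    _ = (j : ℝ) * γ ^ j := by rw [← pow_succ, hjj]
  -- derivatives
  have hSderiv : ∀ γ : ℝ, HasDerivAt S (S' γ) γ := by
    intro γ
    exact HasDerivAt.fun_sum fun j _ => hasDerivAt_pow j γ
  have hPderiv : ∀ γ : ℝ, HasDerivAt P (P' γ) γ := by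
    intro γ
    exact HasDerivAt.fun_sum fun j _ => (hasDerivAt_pow j γ).const_mul (j : ℝ)
  have hPSderiv : ∀ γ : ℝ, S γ ≠ 0 → HasDerivAt (fun x => P x / S x) (D γ) γ := by
    intro γ hS
    exact (hPderiv γ).div (hSderiv γ) hS
  have hg1deriv : ∀ γ : ℝ, S γ ≠ 0 → HasDerivAt g1 (-(D γ)) γ := by
    intro γ hS
    exact (hPSderiv γ hS).const_sub _
  have hh1deriv : ∀ γ ∈ Set.Ioo (0 : ℝ) 1, HasDerivAt h1 (D γ * Real.log γ) γ := by
    intro γ hγ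
    have hγ0 : (0 : ℝ) < γ := hγ.1
    have hS : S γ ≠ 0 := (hS_pos γ hγ0).ne'
    have h1' : HasDerivAt (fun x => Real.log (S x)) (S' γ / S γ) γ :=
      (hSderiv γ).log hS
    have h2' : HasDerivAt (fun x => (P x / S x) * Real.log x)
        (D γ * Real.log γ + (P γ / S γ) * γ⁻¹) γ :=
      (hPSderiv γ hS).mul (Real.hasDerivAt_log hγ0.ne')
    have h3' := ((hasDerivAt_const γ (Real.log M)).sub h1').add h2'
    convert h3' using 1
    case e'_4 => rfl
    case e'_5 => rfl
    case e'_8 => rfl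
    have hkey := key1 γ
    have hS'eq : S' γ = P γ / γ := by
      field_simp
      linarith [key1 γ]
    rw [hS'eq]
    field_simp
    ring
  -- membership of Ioo in the filter
  have hIoo : Set.Ioo (0 : ℝ) 1 ∈ nhdsWithin (1 : ℝ) (Set.Iio 1) :=
    Ioo_mem_nhdsLT_of_mem (by constructor <;> norm_num)
  -- eventually D ≠ 0
  have hDne : ∀ᶠ γ in nhdsWithin (1 : ℝ) (Set.Iio 1), D γ ≠ 0 :=
    (hDcont.eventually_ne hD1ne).filter_mono nhdsWithin_le_nhds
  -- limits of g1, h1 at 1⁻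
  have hg1cont : ContinuousAt g1 1 := by
    apply ContinuousAt.sub continuousAt_const
    apply ContinuousAt.div hPcont.continuousAt hScont.continuousAt
    rw [hS1]; exact hMne
  have hg1val : g1 1 = 0 := by
    rw [hg1def]; simp only []
    rw [hP1, hS1]; field_simp; ring
  have hg1tends : Tendsto g1 (nhdsWithin (1 : ℝ) (Set.Iio 1)) (nhds 0) := by
    have := hg1cont.tendsto
    rw [hg1val] at this
    exact this.mono_left nhdsWithin_le_nhds
  have hh1cont : ContinuousAt h1 1 := by
    apply ContinuousAt.add
    · apply ContinuousAt.sub continuousAt_const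
      exact (Real.continuousAt_log (by rw [hS1]; exact hMne)).comp hScont.continuousAt
    · apply ContinuousAt.mul
      · apply ContinuousAt.div hPcont.continuousAt hScont.continuousAt
        rw [hS1]; exact hMne
      · exact Real.continuousAt_log one_ne_zero
  have hh1val : h1 1 = 0 := by
    rw [hh1def]; simp only []
    rw [hS1, Real.log_one]; ring
  -- the limit of the nice quotient
  have hmain : Tendsto (fun γ => (g1 γ) ^ 2 / h1 γ) (nhdsWithin (1 : ℝ) (Set.Iio 1))
      (nhds (((M : ℝ) ^ 2 - 1) / 6)) := by
    apply HasDerivAt.lhopital_zero_nhdsLT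
      (f' := fun γ => (2 : ℝ) * g1 γ ^ 1 * (-(D γ))) (g' := fun γ => D γ * Real.log γ)
    · filter_upwards [hIoo] with γ hγ
      exact (hg1deriv γ (hS_pos γ hγ.1).ne').pow 2
    · filter_upwards [hIoo] with γ hγ
      exact hh1deriv γ hγ
    · filter_upwards [hIoo, hDne] with γ hγ hD
      exact mul_ne_zero hD (Real.log_ne_zero_of_pos_of_ne_one hγ.1 hγ.2.ne)
    · simpa using hg1tends.pow 2
    · have := hh1cont.tendsto
      rw [hh1val] at this
      exact this.mono_left nhdsWithin_le_nhds
    · -- reduce to  -2 g1 / log  and apply l'Hôpital again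
      have hred : Tendsto (fun γ => (-2 * g1 γ) / Real.log γ)
          (nhdsWithin (1 : ℝ) (Set.Iio 1)) (nhds (((M : ℝ) ^ 2 - 1) / 6)) := by
        apply HasDerivAt.lhopital_zero_nhdsLT
          (f' := fun γ => (-2 : ℝ) * (-(D γ))) (g' := fun γ => γ⁻¹)
        · filter_upwards [hIoo] with γ hγ
          exact (hg1deriv γ (hS_pos γ hγ.1).ne').const_mul (-2 : ℝ)
        · filter_upwards [hIoo] with γ hγ
          exact Real.hasDerivAt_log hγ.1.ne'
        · filter_upwards [hIoo] with γ hγ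
          exact inv_ne_zero hγ.1.ne'
        · simpa using hg1tends.const_mul (-2 : ℝ)
        · have : Tendsto Real.log (nhds (1 : ℝ)) (nhds 0) := by
            simpa using (Real.continuousAt_log one_ne_zero).tendsto
          exact this.mono_left nhdsWithin_le_nhds
        · apply Tendsto.congr' (f₁ := fun γ => 2 * D γ * γ)
          · filter_upwards [hIoo] with γ hγ
            rw [div_eq_mul_inv, inv_inv]
            ring
          · have hc : ContinuousAt (fun γ => 2 * D γ * γ) 1 :=
              (continuousAt_const.mul hDcont).mul continuousAt_id
            have := hc.tendsto
            have hval : 2 * D 1 * 1 = ((M : ℝ) ^ 2 - 1) / 6 := by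
              rw [hD1]; ring
            rw [hval] at this
            exact this.mono_left nhdsWithin_le_nhds
      apply hred.congr'
      filter_upwards [hIoo, hDne] with γ hγ hD
      have hlog : Real.log γ ≠ 0 := Real.log_ne_zero_of_pos_of_ne_one hγ.1 hγ.2.ne
      field_simp
  -- transfer to the original expression
  apply hmain.congr'
  filter_upwards [hIoo] with γ hγ
  have hγ0 : (0 : ℝ) < γ := hγ.1
  have hS : 0 < S γ := hS_pos γ hγ0
  have hsumi : ∑ i ∈ F, (i : ℝ) * (γ ^ i / S γ) = P γ / S γ := by
    rw [hPdef]; simp only []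
    rw [Finset.sum_div]
    exact Finset.sum_congr rfl fun i _ => (mul_div_assoc _ _ _).symm
  have hsum1 : ∑ i ∈ F, γ ^ i / S γ = 1 := by
    rw [← Finset.sum_div]
    exact div_self hS.ne'
  have hent : (-∑ i ∈ F, (γ ^ i / S γ) * Real.log (γ ^ i / S γ)) =
      Real.log (S γ) - (P γ / S γ) * Real.log γ := by
    have hterm : ∀ i ∈ F, (γ ^ i / S γ) * Real.log (γ ^ i / S γ) =
        ((i : ℝ) * (γ ^ i / S γ)) * Real.log γ - (γ ^ i / S γ) * Real.log (S γ) := by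
      intro i _
      rw [Real.log_div (pow_ne_zero i hγ0.ne') hS.ne', Real.log_pow]
      ring
    rw [Finset.sum_congr rfl hterm, Finset.sum_sub_distrib, ← Finset.sum_mul,
      ← Finset.sum_mul, hsumi, hsum1]
    ring
  show (g1 γ) ^ 2 / h1 γ =
      (((M : ℝ) + 1) / 2 - ∑ i ∈ F, (i : ℝ) * (γ ^ i / S γ)) ^ 2 /
        (Real.log M - (-∑ i ∈ F, (γ ^ i / S γ) * Real.log (γ ^ i / S γ)))
  rw [hsumi, hent, hg1def, hh1def]
  ring_nf
end
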